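/- Let F be an algebraically closed field of characteristic 0 and k, r, d ∈ N with n = 2(r+1)+d. For each π ∈ S_{r+1} define μ_π : O(Sym F^{n×n}) → FG_m (m = r+1+d) by μ_π(Π_{ij∈E} x_{i,j}) = G/(s∘π), where s(i) = r+1+i for i ∈ [r+1] and U = [r+1], and define σ_π : O(F^{k×n}) → R_m by σ_π(Π_{j,i} z_{i,j}^{α_{i,j}}) = Π_{j=1}^{r+1} y_{α_j + α_{r+1+π(j)}} · Π_{j=2r+3}^{n} y_{α_j}. Then with τ(q)(z) = q(z^T z) and p the partition-function map, p ∘ μ_π = σ_π ∘ τ for every π ∈ S_{r+1}. -/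

import Mathlib

structure MGraph : Type 1 where
  V : Type
  E : Type
  [fintV : Fintype V]
  [fintE : Fintype E]
  [decV : DecidableEq V]
  [decE : DecidableEq E]
  ends : E → V × V

attribute [instance] MGraph.fintV MGraph.fintE MGraph.decV MGraph.decE

namespace MGraph

/-- multiplicity with which vertex `v` occurs among the endpoints of edge `e`
(a loop counts twice). -/
def inc (G : MGraph) (v : G.V) (e : G.E) : ℕ :=
  (if (G.ends e).1 = v then 1 else 0) + (if (G.ends e).2 = v then 1 else 0)

/-- `κ(δ(v))` : the incidence vector in `ℕ^k` of the multiset of colors seen at `v`. -/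
def degVec (G : MGraph) {k : ℕ} (κ : G.E → Fin k) (v : G.V) : Fin k → ℕ :=
  fun c => ∑ e : G.E, if κ e = c then G.inc v e else 0

/-- the partition function of the `k`-color vertex model `y`. -/
def pf {F : Type} [CommRing F] (k : ℕ) (y : (Fin k → ℕ) → F) (G : MGraph) : F :=
  ∑ κ : G.E → Fin k, ∏ v : G.V, y (G.degVec κ v)

def empty : MGraph where
  V := Empty
  E := Empty
  ends := Empty.elim

def disjUnion (G H : MGraph) : MGraph where
  V := G.V ⊕ H.V
  E := G.E ⊕ H.E
  ends := Sum.elim (fun e => (Sum.inl (G.ends e).1, Sum.inl (G.ends e).2))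
    (fun e => (Sum.inr (H.ends e).1, Sum.inr (H.ends e).2))

/-- `G_t` : add the edges `{u t(u) | u ∈ U}`. -/
def addEdges (G : MGraph) (U : Finset G.V) (t : {v // v ∈ U} → G.V) : MGraph where
  V := G.V
  E := G.E ⊕ {v // v ∈ U}
  ends := Sum.elim G.ends (fun u => (u.1, t u))

/-- `G/t` : add the edges `{u t(u) | u ∈ U}` and contract them. -/
noncomputable def contract (G : MGraph) (U : Finset G.V) (t : {v // v ∈ U} → G.V) : MGraph :=
  letI s : Setoid G.V := Relation.EqvGen.setoid (fun a b => ∃ h : a ∈ U, t ⟨a, h⟩ = b)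
  letI : DecidableEq (Quotient s) := Classical.decEq _
  letI : Fintype (Quotient s) := Fintype.ofSurjective (Quotient.mk s)
    (fun q => Quot.exists_rep q)
  { V := Quotient s
    E := G.E
    ends := fun e => (Quotient.mk s (G.ends e).1, Quotient.mk s (G.ends e).2) }

/-- isomorphism of multigraphs. -/
structure Iso (G H : MGraph) where
  vEquiv : G.V ≃ H.V
  eEquiv : G.E ≃ H.E
  ends_eq : ∀ e, H.ends (eEquiv e) = Prod.map vEquiv vEquiv (G.ends e) ∨
    H.ends (eEquiv e) = (Prod.map vEquiv vEquiv (G.ends e)).swap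

end MGraph

set_option linter.unusedVariables false

open MvPolynomial

/-- the polynomial ring `R = F[y_α : α ∈ ℕ^k]`. -/
abbrev PolyR (F : Type) [CommRing F] (k : ℕ) : Type := MvPolynomial (Fin k → ℕ) F

/-- the partition function of `G` as a polynomial in the variables `y_α`, i.e.
`p(G)(y) = f_y(G)`. -/
noncomputable def pPoly (F : Type) [CommRing F] (k : ℕ) (G : MGraph) : PolyR F k :=
  ∑ κ : G.E → Fin k, ∏ v : G.V, X (G.degVec κ v)

/-- the linear extension of `p` to formal linear combinations of graphs. -/
noncomputable def pLin (F : Type) [CommRing F] (k : ℕ) : (MGraph →₀ F) →ₗ[F] PolyR F k :=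
  Finsupp.linearCombination F (pPoly F k)

/-- the substitution action of a matrix `g` on `F[x_1,…,x_k]` : `x_i ↦ ∑_j g_{j i} x_j`. -/
noncomputable def substAct {F : Type} [CommRing F] {k : ℕ}
    (g : Matrix (Fin k) (Fin k) F) :
    MvPolynomial (Fin k) F →ₐ[F] MvPolynomial (Fin k) F :=
  aeval (fun i => ∑ j, C (g j i) * X j)

/-- the linear map `F[x_1,…,x_k] → R` sending the monomial `x^α` to the variable `y_α`. -/
noncomputable def monToVar (F : Type) [CommRing F] (k : ℕ)
    (q : MvPolynomial (Fin k) F) : PolyR F k :=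
  ∑ d ∈ q.support, C (q.coeff d) * X (⇑d : Fin k → ℕ)

/-- the action of a matrix `g` on `R = F[y_α]` induced from the substitution action on
`F[x_1,…,x_k]` via the identification `y_α ↔ x^α`. -/
noncomputable def gAct {F : Type} [CommRing F] {k : ℕ}
    (g : Matrix (Fin k) (Fin k) F) : PolyR F k →ₐ[F] PolyR F k :=
  aeval (fun α : Fin k → ℕ => monToVar F k (substAct g (∏ i, X i ^ α i)))

/-- `O_k`-invariance of an element of `R`. -/
def OkInvariant {F : Type} [CommRing F] {k : ℕ} (q : PolyR F k) : Prop :=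
  ∀ g : Matrix (Fin k) (Fin k) F, g.transpose * g = 1 → gAct g q = q

/-- `τ : O(Sym F^{n×n}) → O(F^{k×n})`, `τ(q)(z) = q(zᵀz)` : the algebra map sending the
coordinate `x_{ij}` to `∑_h z_{h,i} z_{h,j}`. -/
noncomputable def tauMap (F : Type) [CommRing F] (k n : ℕ) :
    MvPolynomial (Sym2 (Fin n)) F →ₐ[F] MvPolynomial (Fin k × Fin n) F :=
  aeval (fun s => Sym2.lift
    ⟨fun i j => ∑ h : Fin k, X (h, i) * X (h, j),
      fun i j => Finset.sum_congr rfl (fun h _ => mul_comm _ _)⟩ s)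

/-- the multigraph on vertex set `[n]` whose edge multiset is given by the exponent
vector `d` of a monomial in the variables `x_{ij}`. -/
noncomputable def graphOf (n : ℕ) (d : Sym2 (Fin n) →₀ ℕ) : MGraph where
  V := Fin n
  E := (s : Sym2 (Fin n)) × Fin (d s)
  ends := fun e => (Quot.out e.1 : Fin n × Fin n)

/-- `μ_π : O(Sym F^{n×n}) → FG_m` (`n = 2(r+1)+d`, `m = r+1+d`): the monomial
`∏_{ij ∈ E} x_{ij}` is sent to `G/(s∘π)` where `G = ([n], E)`, `U = [r+1]` and
`s(i) = r+1+i`. -/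
noncomputable def muPi (F : Type) [CommRing F] (r d : ℕ) (π : Equiv.Perm (Fin (r + 1))) :
    MvPolynomial (Sym2 (Fin (2 * (r + 1) + d))) F →ₗ[F] (MGraph →₀ F) :=
  (MvPolynomial.basisMonomials (Sym2 (Fin (2 * (r + 1) + d))) F).constr F
    (fun dm => Finsupp.single
      ((graphOf (2 * (r + 1) + d) dm).contract
        (Finset.univ.filter (fun v : Fin (2 * (r + 1) + d) => v.val < r + 1))
        (fun u => ⟨r + 1 + (π ⟨u.1.val, (Finset.mem_filter.mp u.2).2⟩).val,
          by have := (π ⟨u.1.val, (Finset.mem_filter.mp u.2).2⟩).isLt; omega⟩))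
      (1 : F))

/-- `σ_π : O(F^{k×n}) → R_m`, sending the monomial with exponent matrix `α` to
`∏_{j=1}^{r+1} y_{α_j + α_{r+1+π(j)}} · ∏_{j=2r+3}^{n} y_{α_j}`. -/
noncomputable def sigmaPi (F : Type) [CommRing F] (k r d : ℕ)
    (π : Equiv.Perm (Fin (r + 1))) :
    MvPolynomial (Fin k × Fin (2 * (r + 1) + d)) F →ₗ[F] PolyR F k :=
  (MvPolynomial.basisMonomials (Fin k × Fin (2 * (r + 1) + d)) F).constr F
    (fun β =>
      (∏ j : Fin (r + 1), X (fun i =>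
          β (i, (⟨j.val, by have := j.isLt; omega⟩ : Fin (2 * (r + 1) + d))) +
          β (i, (⟨r + 1 + (π j).val, by have := (π j).isLt; omega⟩ :
              Fin (2 * (r + 1) + d))))) *
      ∏ j : Fin d, X (fun i =>
        β (i, (⟨2 * (r + 1) + j.val, by have := j.isLt; omega⟩ :
            Fin (2 * (r + 1) + d)))))
section Aux
open MvPolynomial

lemma prod_monomial {F : Type} [CommRing F] {ι σ : Type*} (s : Finset ι) (f : ι → (σ →₀ ℕ)) :
    (∏ e ∈ s, (monomial (f e) (1:F))) = monomial (∑ e ∈ s, f e) 1 := by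
  induction s using Finset.cons_induction with
  | empty => simp
  | cons a s ha ih => rw [Finset.prod_cons, ih, Finset.sum_cons, monomial_mul, one_mul]

lemma sym2_lift_out {α β : Type*} (f : { f : α → α → β // ∀ a₁ a₂, f a₁ a₂ = f a₂ a₁ })
    (s : Sym2 α) : Sym2.lift f s = f.1 (Quot.out s).1 (Quot.out s).2 := by
  conv_lhs => rw [← Quot.out_eq s]
  exact Sym2.lift_mk f _ _

noncomputable def expoM {n : ℕ} (k : ℕ) (dm : Sym2 (Fin n) →₀ ℕ)
    (κ : ((s : Sym2 (Fin n)) × Fin (dm s)) → Fin k) : Fin k × Fin n →₀ ℕ :=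
  ∑ e : (s : Sym2 (Fin n)) × Fin (dm s),
    (Finsupp.single (κ e, (Quot.out e.1).1) 1 + Finsupp.single (κ e, (Quot.out e.1).2) 1)

lemma tau_monomial (F : Type) [CommRing F] (k n : ℕ) (dm : Sym2 (Fin n) →₀ ℕ) :
    tauMap F k n (monomial dm 1) =
      ∑ κ : ((s : Sym2 (Fin n)) × Fin (dm s)) → Fin k,
        monomial (expoM k dm κ) 1 := by
  unfold expoM
  rw [tauMap, aeval_monomial, map_one, one_mul]
  rw [Finsupp.prod_fintype _ _ (fun s => pow_zero _)]
  have h1 : ∀ s : Sym2 (Fin n), (Sym2.lift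
      ⟨fun i j => ∑ h : Fin k, X (h, i) * X (h, j),
        fun i j => Finset.sum_congr rfl (fun h _ => mul_comm _ _)⟩ s : MvPolynomial (Fin k × Fin n) F)
      = ∑ h : Fin k, monomial (Finsupp.single (h, (Quot.out s).1) 1 + Finsupp.single (h, (Quot.out s).2) 1) 1 := by
    intro s
    rw [sym2_lift_out]
    show (∑ h : Fin k, X (h, (Quot.out s).1) * X (h, (Quot.out s).2) : MvPolynomial (Fin k × Fin n) F) = _
    refine Finset.sum_congr rfl fun h _ => ?_
    rw [show ((fun₀ | (h, (Quot.out s).1) => 1) + fun₀ | (h, (Quot.out s).2) => 1 : Fin k × Fin n →₀ ℕ)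
        = Finsupp.single (h, (Quot.out s).1) 1 + Finsupp.single (h, (Quot.out s).2) 1 from rfl,
      monomial_add_single, ← X_pow_eq_monomial, pow_one, pow_one, mul_comm]
  have h2 : (∏ s : Sym2 (Fin n), (Sym2.lift
      ⟨fun i j => ∑ h : Fin k, X (h, i) * X (h, j),
        fun i j => Finset.sum_congr rfl (fun h _ => mul_comm _ _)⟩ s : MvPolynomial (Fin k × Fin n) F) ^ dm s)
      = ∏ e : (s : Sym2 (Fin n)) × Fin (dm s), ∑ h : Fin k,
          (monomial (Finsupp.single (h, (Quot.out e.1).1) 1 + Finsupp.single (h, (Quot.out e.1).2) 1) (1:F)) := by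
    rw [← Finset.univ_sigma_univ, Finset.prod_sigma]
    exact Finset.prod_congr rfl fun s _ => by
      simp [h1 s, Finset.prod_const]
  rw [h2, Finset.prod_univ_sum, Fintype.piFinset_univ]
  exact Finset.sum_congr rfl fun κ _ => prod_monomial _ _

end Aux
set_option maxHeartbeats 1000000
section Contract
open MvPolynomial

noncomputable def contractSetoid (G : MGraph) (U : Finset G.V) (t : {v // v ∈ U} → G.V) :
    Setoid G.V := Relation.EqvGen.setoid (fun a b => ∃ h : a ∈ U, t ⟨a, h⟩ = b)

lemma mk_eq_mk_iff_cls {G : MGraph} {U : Finset G.V} {t : {v // v ∈ U} → G.V}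
    {ι : Type} (c : G.V → ι) (rp : ι → G.V)
    (hc : ∀ a b, (∃ h : a ∈ U, t ⟨a, h⟩ = b) → c a = c b)
    (hcr : ∀ x, c (rp x) = x)
    (hrc : ∀ v, (contractSetoid G U t).r (rp (c v)) v) (a : G.V) (x : ι) :
    (Quotient.mk (contractSetoid G U t) a = Quotient.mk (contractSetoid G U t) (rp x)) ↔
      c a = x := by
  constructor
  · intro h
    have hinv : ∀ p q : G.V,
        Relation.EqvGen (fun a b => ∃ h : a ∈ U, t ⟨a, h⟩ = b) p q → c p = c q := by
      intro p q hpq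
      induction hpq with
      | rel p q hr => exact hc p q hr
      | refl => rfl
      | symm _ _ _ ih => exact ih.symm
      | trans _ _ _ _ _ ih1 ih2 => exact ih1.trans ih2
    exact (hinv _ _ (Quotient.exact h)).trans (hcr x)
  · intro h
    subst h
    exact (Quotient.sound (hrc a)).symm

lemma contract_ends (G : MGraph) (U : Finset G.V) (t : {v // v ∈ U} → G.V)
    (e : (G.contract U t).E) :
    (G.contract U t).ends e = (Quotient.mk (contractSetoid G U t) (G.ends e).1,
      Quotient.mk (contractSetoid G U t) (G.ends e).2) := rfl

lemma pPoly_contract (F : Type) [CommRing F] (k : ℕ) (G : MGraph) (U : Finset G.V)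
    (t : {v // v ∈ U} → G.V) {ι : Type} [Fintype ι] [DecidableEq ι]
    (c : G.V → ι) (rp : ι → G.V)
    (hc : ∀ a b, (∃ h : a ∈ U, t ⟨a, h⟩ = b) → c a = c b)
    (hcr : ∀ x, c (rp x) = x)
    (hrc : ∀ v, (contractSetoid G U t).r (rp (c v)) v) :
    pPoly F k (G.contract U t) =
      ∑ κ : (G.contract U t).E → Fin k, ∏ x : ι,
        X (fun i => ∑ v : G.V, if c v = x then G.degVec κ v i else 0) := by
  rw [pPoly]
  refine Finset.sum_congr rfl fun κ _ => ?_
  have hbij : Function.Bijective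
      (fun x : ι => (Quotient.mk (contractSetoid G U t) (rp x) : (G.contract U t).V)) := by
    constructor
    · intro x y hxy
      have := (mk_eq_mk_iff_cls c rp hc hcr hrc (rp x) y).mp hxy
      rwa [hcr] at this
    · intro q
      exact Quotient.inductionOn q fun v => ⟨c v, Quotient.sound (hrc v)⟩
  letI : Fintype (Quotient (contractSetoid G U t)) := (G.contract U t).fintV
  show (∏ q : Quotient (contractSetoid G U t), (X ((G.contract U t).degVec κ q) : PolyR F k))
      = ∏ x : ι, X (fun i => ∑ v : G.V, if c v = x then G.degVec κ v i else 0)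
  refine (Fintype.prod_bijective
    (fun x : ι => (Quotient.mk (contractSetoid G U t) (rp x) : (G.contract U t).V)) hbij
    (fun x => (X (fun i => ∑ v : G.V, if c v = x then G.degVec κ v i else 0)
      : PolyR F k))
    (fun q => X ((G.contract U t).degVec κ q)) (fun x => ?_)).symm
  show (X (fun i => ∑ v : G.V, if c v = x then G.degVec κ v i else 0) : PolyR F k)
      = X ((G.contract U t).degVec κ (Quotient.mk (contractSetoid G U t) (rp x)))
  congr 1
  funext i
  rw [← Finset.sum_filter]
  simp only [MGraph.degVec]
  rw [Finset.sum_comm]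
  refine Finset.sum_congr rfl fun e _ => ?_
  by_cases hk : κ e = i
  · simp only [hk, if_true]
    simp only [MGraph.inc, contract_ends]
    have h1 := mk_eq_mk_iff_cls c rp hc hcr hrc (G.ends e).1 x
    have h2 := mk_eq_mk_iff_cls c rp hc hcr hrc (G.ends e).2 x
    rw [Finset.sum_add_distrib, Finset.sum_ite_eq, Finset.sum_ite_eq]
    simp only [Finset.mem_filter, Finset.mem_univ, true_and]
    congr 1
    · split_ifs with ha hb hb'
      · rfl
      · exact absurd (h1.mpr ha) hb
      · exact absurd (h1.mp hb') ha
      · rfl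
    · split_ifs with ha hb hb'
      · rfl
      · exact absurd (h2.mpr ha) hb
      · exact absurd (h2.mp hb') ha
      · rfl
  · simp [hk]
end Contract
section Cls
variable (r d : ℕ) (π : Equiv.Perm (Fin (r + 1)))

def cls (v : Fin (2 * (r + 1) + d)) : Fin (r + 1) ⊕ Fin d :=
  if h : v.val < r + 1 then Sum.inl ⟨v.val, h⟩
  else if h2 : v.val < 2 * (r + 1) then Sum.inl (π.symm ⟨v.val - (r + 1), by omega⟩)
  else Sum.inr ⟨v.val - 2 * (r + 1), by omega⟩

def rep : Fin (r + 1) ⊕ Fin d → Fin (2 * (r + 1) + d)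
  | Sum.inl j => ⟨j.val, by omega⟩
  | Sum.inr j => ⟨2 * (r + 1) + j.val, by omega⟩

lemma cls_eq_inl_iff (v : Fin (2 * (r + 1) + d)) (j : Fin (r + 1)) :
    cls r d π v = Sum.inl j ↔ v.val = j.val ∨ v.val = r + 1 + (π j).val := by
  unfold cls
  split_ifs with h h2
  · simp only [Sum.inl.injEq, Fin.ext_iff]
    have := (π j).isLt
    constructor
    · intro hh; omega
    · intro hh
      rcases hh with hh | hh
      · exact hh
      · omega
  · simp only [Sum.inl.injEq, Equiv.symm_apply_eq, Fin.ext_iff]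
    constructor
    · intro hh; right; omega
    · intro hh
      rcases hh with hh | hh
      · omega
      · omega
  · simp only [reduceCtorEq, false_iff]
    have := (π j).isLt
    intro hh; omega

lemma cls_eq_inr_iff (v : Fin (2 * (r + 1) + d)) (j : Fin d) :
    cls r d π v = Sum.inr j ↔ v.val = 2 * (r + 1) + j.val := by
  unfold cls
  split_ifs with h h2
  · simp only [reduceCtorEq, false_iff]; omega
  · simp only [reduceCtorEq, false_iff]; omega
  · simp only [Sum.inr.injEq, Fin.ext_iff]; omega

lemma cls_rep (x : Fin (r + 1) ⊕ Fin d) : cls r d π (rep r d x) = x := by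
  cases x with
  | inl j => exact (cls_eq_inl_iff r d π _ j).mpr (Or.inl rfl)
  | inr j => exact (cls_eq_inr_iff r d π _ j).mpr rfl

lemma filter_cls_inl (j : Fin (r + 1)) :
    Finset.univ.filter (fun v : Fin (2 * (r + 1) + d) => cls r d π v = Sum.inl j) =
      {(⟨j.val, by omega⟩ : Fin (2 * (r + 1) + d)),
       ⟨r + 1 + (π j).val, by have := (π j).isLt; omega⟩} := by
  ext v
  simp only [Finset.mem_filter, Finset.mem_univ, true_and, Finset.mem_insert,
    Finset.mem_singleton, cls_eq_inl_iff, Fin.ext_iff]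

lemma filter_cls_inr (j : Fin d) :
    Finset.univ.filter (fun v : Fin (2 * (r + 1) + d) => cls r d π v = Sum.inr j) =
      {(⟨2 * (r + 1) + j.val, by omega⟩ : Fin (2 * (r + 1) + d))} := by
  ext v
  simp only [Finset.mem_filter, Finset.mem_univ, true_and,
    Finset.mem_singleton, cls_eq_inr_iff, Fin.ext_iff]

lemma sum_cls_inl (j : Fin (r + 1)) (f : Fin (2 * (r + 1) + d) → ℕ) :
    (∑ v : Fin (2 * (r + 1) + d), if cls r d π v = Sum.inl j then f v else 0)
      = f ⟨j.val, by omega⟩ + f ⟨r + 1 + (π j).val, by have := (π j).isLt; omega⟩ := by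
  rw [← Finset.sum_filter, filter_cls_inl, Finset.sum_pair]
  refine fun hh => ?_
  have h2 := congrArg Fin.val hh
  simp only at h2
  omega

lemma sum_cls_inr (j : Fin d) (f : Fin (2 * (r + 1) + d) → ℕ) :
    (∑ v : Fin (2 * (r + 1) + d), if cls r d π v = Sum.inr j then f v else 0)
      = f ⟨2 * (r + 1) + j.val, by omega⟩ := by
  rw [← Finset.sum_filter, filter_cls_inr, Finset.sum_singleton]

end Cls
section Expo
open MvPolynomial

lemma expo_apply {n : ℕ} (k : ℕ) (dm : Sym2 (Fin n) →₀ ℕ)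
    (κ : ((s : Sym2 (Fin n)) × Fin (dm s)) → Fin k) (i : Fin k) (v : Fin n) :
    expoM k dm κ (i, v) = (graphOf n dm).degVec κ v i := by
  simp only [MGraph.degVec, expoM]
  rw [Finsupp.finset_sum_apply]
  refine Finset.sum_congr rfl fun e _ => ?_
  rw [Finsupp.add_apply, Finsupp.single_apply, Finsupp.single_apply]
  simp only [MGraph.inc]
  have hends : (graphOf n dm).ends e = Quot.out e.1 := rfl
  rw [hends]
  show ((if (κ e, (Quot.out e.1).1) = (i, v) then 1 else 0) + if (κ e, (Quot.out e.1).2) = (i, v) then 1 else 0) =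
    if κ e = i then (if (Quot.out e.1).1 = v then 1 else 0) + (if (Quot.out e.1).2 = v then 1 else 0) else 0
  by_cases h1 : κ e = i <;> by_cases h2 : (Quot.out e.1).1 = v <;>
    by_cases h3 : (Quot.out e.1).2 = v <;> simp_all [Prod.ext_iff]

end Expo

/-- for every `π ∈ S_{r+1}` the diagram commutes: `p ∘ μ_π = σ_π ∘ τ`. -/
theorem pLin_comp_muPi_eq_sigmaPi_comp_tauMap
    (F : Type) [Field F] [IsAlgClosed F] [CharZero F] (k r d : ℕ)
    (π : Equiv.Perm (Fin (r + 1))) :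
    (pLin F k).comp (muPi F r d π) =
      (sigmaPi F k r d π).comp (tauMap F k (2 * (r + 1) + d)).toLinearMap := by
  refine (MvPolynomial.basisMonomials (Sym2 (Fin (2 * (r + 1) + d))) F).ext fun dm => ?_
  rw [LinearMap.comp_apply, LinearMap.comp_apply, AlgHom.toLinearMap_apply]
  rw [muPi, Module.Basis.constr_basis]
  rw [pLin, Finsupp.linearCombination_single, one_smul]
  have hb : ((MvPolynomial.basisMonomials (Sym2 (Fin (2 * (r + 1) + d))) F) dm
      : MvPolynomial (Sym2 (Fin (2 * (r + 1) + d))) F) = monomial dm 1 := by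
    simp [MvPolynomial.coe_basisMonomials]
  rw [hb, tau_monomial, map_sum]
  have hσ : ∀ κ : ((s : Sym2 (Fin (2 * (r + 1) + d))) × Fin (dm s)) → Fin k,
      (sigmaPi F k r d π) (monomial (expoM k dm κ) 1)
        = (∏ j : Fin (r + 1), X (fun i =>
            expoM k dm κ (i, (⟨j.val, by have := j.isLt; omega⟩ : Fin (2 * (r + 1) + d))) +
            expoM k dm κ (i, (⟨r + 1 + (π j).val, by have := (π j).isLt; omega⟩ :
                Fin (2 * (r + 1) + d))))) *
          ∏ j : Fin d, X (fun i =>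
            expoM k dm κ (i, (⟨2 * (r + 1) + j.val, by have := j.isLt; omega⟩ :
                Fin (2 * (r + 1) + d)))) := by
    intro κ
    have hmb : (monomial (expoM k dm κ) (1 : F))
        = (MvPolynomial.basisMonomials (Fin k × Fin (2 * (r + 1) + d)) F) (expoM k dm κ) := by
      simp [MvPolynomial.coe_basisMonomials]
    rw [hmb, sigmaPi, Module.Basis.constr_basis]
  simp_rw [hσ]
  have hc1 : ∀ a b : Fin (2 * (r + 1) + d),
      (∃ h : a ∈ Finset.univ.filter (fun v : Fin (2 * (r + 1) + d) => v.val < r + 1),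
        (⟨r + 1 + (π ⟨a.val, (Finset.mem_filter.mp h).2⟩).val,
          by have := (π ⟨a.val, (Finset.mem_filter.mp h).2⟩).isLt; omega⟩ :
            Fin (2 * (r + 1) + d)) = b) →
      cls r d π a = cls r d π b := by
    rintro a b ⟨h, rfl⟩
    have ha : a.val < r + 1 := (Finset.mem_filter.mp h).2
    rw [(cls_eq_inl_iff r d π a ⟨a.val, ha⟩).mpr (Or.inl rfl),
        (cls_eq_inl_iff r d π _ ⟨a.val, ha⟩).mpr (Or.inr rfl)]
  have hrc1 : ∀ v : Fin (2 * (r + 1) + d),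
      (contractSetoid (graphOf (2 * (r + 1) + d) dm)
        (Finset.univ.filter (fun v : Fin (2 * (r + 1) + d) => v.val < r + 1))
        (fun u => ⟨r + 1 + (π ⟨u.1.val, (Finset.mem_filter.mp u.2).2⟩).val,
          by have := (π ⟨u.1.val, (Finset.mem_filter.mp u.2).2⟩).isLt; omega⟩)).r
        (rep r d (cls r d π v)) v := by
    intro v
    show Relation.EqvGen _ (rep r d (cls r d π v)) v
    by_cases h1 : v.val < r + 1
    · have hcv : cls r d π v = Sum.inl ⟨v.val, h1⟩ :=
        (cls_eq_inl_iff r d π v ⟨v.val, h1⟩).mpr (Or.inl rfl)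
      rw [hcv]
      have hrv : rep r d (Sum.inl ⟨v.val, h1⟩) = v := Fin.ext rfl
      rw [hrv]
      exact Relation.EqvGen.refl v
    · by_cases h2 : v.val < 2 * (r + 1)
      · set j : Fin (r + 1) := π.symm ⟨v.val - (r + 1), by omega⟩ with hj
        have hπj : (π j).val = v.val - (r + 1) := by rw [hj, Equiv.apply_symm_apply]
        have hcv : cls r d π v = Sum.inl j :=
          (cls_eq_inl_iff r d π v j).mpr (Or.inr (by omega))
        rw [hcv]
        refine Relation.EqvGen.rel _ _ ⟨?_, ?_⟩
        · refine Finset.mem_filter.mpr ⟨Finset.mem_univ _, ?_⟩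
          exact j.isLt
        · refine Fin.ext ?_
          show r + 1 + (π j).val = v.val
          omega
      · have hcv : cls r d π v = Sum.inr ⟨v.val - 2 * (r + 1), by omega⟩ :=
          (cls_eq_inr_iff r d π v _).mpr (by show v.val = 2 * (r + 1) + (v.val - 2 * (r + 1)); omega)
        rw [hcv]
        have hrv : rep r d (Sum.inr ⟨v.val - 2 * (r + 1), by omega⟩) = v := by
          have h3 : 2 * (r + 1) + (v.val - 2 * (r + 1)) = v.val := by omega
          exact Fin.ext h3
        rw [hrv]
        exact Relation.EqvGen.refl v
  rw [pPoly_contract F k (graphOf (2 * (r + 1) + d) dm)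
      (Finset.univ.filter (fun v : Fin (2 * (r + 1) + d) => v.val < r + 1))
      (fun u => ⟨r + 1 + (π ⟨u.1.val, (Finset.mem_filter.mp u.2).2⟩).val,
        by have := (π ⟨u.1.val, (Finset.mem_filter.mp u.2).2⟩).isLt; omega⟩)
      (cls r d π) (rep r d) hc1 (cls_rep r d π) hrc1]
  refine Finset.sum_congr rfl fun κ _ => ?_
  rw [Fintype.prod_sum_type]
  congr 1
  · refine Finset.prod_congr rfl fun j _ => ?_
    congr 1
    funext i
    show (∑ v : Fin (2 * (r + 1) + d),
        if cls r d π v = Sum.inl j then (graphOf (2 * (r + 1) + d) dm).degVec κ v i else 0)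
      = expoM k dm κ (i, ⟨j.val, by omega⟩) +
        expoM k dm κ (i, ⟨r + 1 + (π j).val, by have := (π j).isLt; omega⟩)
    rw [sum_cls_inl r d π j]
    exact (congrArg₂ (· + ·) (expo_apply k dm κ i _) (expo_apply k dm κ i _)).symm
  · refine Finset.prod_congr rfl fun j _ => ?_
    congr 1
    funext i
    show (∑ v : Fin (2 * (r + 1) + d),
        if cls r d π v = Sum.inr j then (graphOf (2 * (r + 1) + d) dm).degVec κ v i else 0)
      = expoM k dm κ (i, ⟨2 * (r + 1) + j.val, by omega⟩)
    rw [sum_cls_inr r d π j]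
    exact (expo_apply k dm κ i _).symm
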